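/- Let A be a commutative k-algebra. The quasi-shuffle algebra QS(A) = (T(A), *, 1_k), equipped with the deconcatenation coproduct Δ(a_1⊗...⊗a_n) = sum_{i=0}^n (a_1⊗...⊗a_i) ⊗ (a_{i+1}⊗...⊗a_n) and counit ε(𝐚) = δ_{𝐚,1_k}, is a bialgebra; that is, Δ and ε are algebra morphisms for the quasi-shuffle product *. -/

import Mathlib

open scoped TensorProduct

/-- Monomials in the tensor algebra, indexed by lists. -/
def qsMono {k A : Type*} [CommRing k] [CommRing A] [Algebra k A] :
    List A → TensorAlgebra k A
  | [] => 1
  | a :: l => TensorAlgebra.ι k a * qsMono l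

lemma qsMono_nil {k A : Type*} [CommRing k] [CommRing A] [Algebra k A] :
    qsMono (k := k) (A := A) [] = 1 := rfl

lemma qsMono_cons {k A : Type*} [CommRing k] [CommRing A] [Algebra k A] (a : A) (l : List A) :
    qsMono (k := k) (a :: l) = TensorAlgebra.ι k a * qsMono l := rfl

lemma qsMono_append {k A : Type*} [CommRing k] [CommRing A] [Algebra k A] (l l' : List A) :
    qsMono (k := k) (l ++ l') = qsMono l * qsMono l' := by
  induction l with
  | nil => simp [qsMono_nil]
  | cons a l ih => simp [qsMono_cons, ih, mul_assoc]

lemma qsMono_span {k A : Type*} [CommRing k] [CommRing A] [Algebra k A]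
    (x : TensorAlgebra k A) :
    x ∈ Submodule.span k (Set.range (qsMono (k := k) (A := A))) := by
  induction x using TensorAlgebra.induction with
  | algebraMap r =>
    rw [Algebra.algebraMap_eq_smul_one]
    exact Submodule.smul_mem _ _ (Submodule.subset_span ⟨[], rfl⟩)
  | ι a =>
    have : TensorAlgebra.ι k a = qsMono [a] := by simp [qsMono_cons, qsMono_nil]
    rw [this]
    exact Submodule.subset_span ⟨[a], rfl⟩
  | mul x y hx hy =>
    induction hx using Submodule.span_induction with
    | mem u hu =>
      induction hy using Submodule.span_induction with
      | mem v hv =>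
        obtain ⟨l, rfl⟩ := hu
        obtain ⟨l', rfl⟩ := hv
        rw [← qsMono_append]
        exact Submodule.subset_span ⟨l ++ l', rfl⟩
      | zero => simpa using Submodule.zero_mem _
      | add v w _ _ hv hw => rw [mul_add]; exact Submodule.add_mem _ hv hw
      | smul r v _ hv => rw [mul_smul_comm]; exact Submodule.smul_mem _ _ hv
    | zero => simpa using Submodule.zero_mem _
    | add u v _ _ hu hv => rw [add_mul]; exact Submodule.add_mem _ hu hv
    | smul r u _ hu => rw [smul_mul_assoc]; exact Submodule.smul_mem _ _ hu
  | add x y hx hy => exact Submodule.add_mem _ hx hy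

set_option maxHeartbeats 1000000 in
theorem stmt7 {k A : Type*} [CommRing k] [CommRing A] [Algebra k A] [Algebra ℚ k]
    (mqs : TensorAlgebra k A →ₗ[k] TensorAlgebra k A →ₗ[k] TensorAlgebra k A)
    (hleft : ∀ x : TensorAlgebra k A, mqs 1 x = x)
    (hright : ∀ x : TensorAlgebra k A, mqs x 1 = x)
    (hrec : ∀ (a b : A) (x y : TensorAlgebra k A),
      mqs (TensorAlgebra.ι k a * x) (TensorAlgebra.ι k b * y) =
        TensorAlgebra.ι k a * mqs x (TensorAlgebra.ι k b * y) +
          TensorAlgebra.ι k b * mqs (TensorAlgebra.ι k a * x) y +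
          TensorAlgebra.ι k (a * b) * mqs x y)
    -- the deconcatenation coproduct
    (Δ : TensorAlgebra k A →ₗ[k] TensorAlgebra k A ⊗[k] TensorAlgebra k A)
    (hΔone : Δ 1 = 1 ⊗ₜ 1)
    (hΔrec : ∀ (a : A) (x : TensorAlgebra k A),
      Δ (TensorAlgebra.ι k a * x) =
        (TensorAlgebra.ι k a ⊗ₜ (1 : TensorAlgebra k A)) * Δ x +
          (1 : TensorAlgebra k A) ⊗ₜ (TensorAlgebra.ι k a * x))
    -- the counit
    (ε : TensorAlgebra k A →ₗ[k] k)
    (hεone : ε 1 = 1)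
    (hεrec : ∀ (a : A) (x : TensorAlgebra k A), ε (TensorAlgebra.ι k a * x) = 0) :
    (∀ x y : TensorAlgebra k A,
        Δ (mqs x y) = TensorProduct.map₂ mqs mqs (Δ x) (Δ y)) ∧
      (∀ x y : TensorAlgebra k A, ε (mqs x y) = ε x * ε y) := by
  set T := TensorAlgebra k A
  set ι := TensorAlgebra.ι k (M := A)
  -- unit laws for map₂
  have hunitL : ∀ z : T ⊗[k] T,
      TensorProduct.map₂ mqs mqs ((1 : T) ⊗ₜ (1 : T)) z = z := by
    intro z
    induction z using TensorProduct.induction_on with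
    | zero => simp
    | tmul u v => simp [TensorProduct.map₂_apply_tmul, hleft]
    | add u v hu hv => rw [map_add, hu, hv]
  have hunitR : ∀ z : T ⊗[k] T,
      TensorProduct.map₂ mqs mqs z ((1 : T) ⊗ₜ (1 : T)) = z := by
    intro z
    induction z using TensorProduct.induction_on with
    | zero => simp
    | tmul u v => simp [TensorProduct.map₂_apply_tmul, hright]
    | add u v hu hv =>
      rw [map_add, LinearMap.add_apply, hu, hv]
  -- key bilinear identities
  have keyi : ∀ (a b : A) (u v : T ⊗[k] T),
      TensorProduct.map₂ mqs mqs ((ι a ⊗ₜ (1 : T)) * u) ((ι b ⊗ₜ (1 : T)) * v) =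
        (ι a ⊗ₜ (1 : T)) * TensorProduct.map₂ mqs mqs u ((ι b ⊗ₜ (1 : T)) * v) +
          (ι b ⊗ₜ (1 : T)) * TensorProduct.map₂ mqs mqs ((ι a ⊗ₜ (1 : T)) * u) v +
          (ι (a * b) ⊗ₜ (1 : T)) * TensorProduct.map₂ mqs mqs u v := by
    intro a b u v
    induction u using TensorProduct.induction_on with
    | zero => simp
    | add u₁ u₂ h₁ h₂ =>
      simp only [mul_add, map_add, LinearMap.add_apply, h₁, h₂]
      abel
    | tmul p q =>
      induction v using TensorProduct.induction_on with
      | zero => simp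
      | add v₁ v₂ h₁ h₂ =>
        simp only [mul_add, map_add, LinearMap.add_apply, h₁, h₂]
        abel
      | tmul r s =>
        simp only [Algebra.TensorProduct.tmul_mul_tmul, one_mul, mul_one,
          TensorProduct.map₂_apply_tmul, TensorProduct.map_tmul, hrec,
          TensorProduct.add_tmul]
  have keyii : ∀ (a : A) (u : T ⊗[k] T) (y : T),
      TensorProduct.map₂ mqs mqs ((ι a ⊗ₜ (1 : T)) * u) ((1 : T) ⊗ₜ y) =
        (ι a ⊗ₜ (1 : T)) * TensorProduct.map₂ mqs mqs u ((1 : T) ⊗ₜ y) := by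
    intro a u y
    induction u using TensorProduct.induction_on with
    | zero => simp
    | add u₁ u₂ h₁ h₂ =>
      simp only [mul_add, map_add, LinearMap.add_apply, h₁, h₂]
    | tmul p q =>
      simp [Algebra.TensorProduct.tmul_mul_tmul, TensorProduct.map₂_apply_tmul,
        hright]
  have keyiii : ∀ (b : A) (x : T) (v : T ⊗[k] T),
      TensorProduct.map₂ mqs mqs ((1 : T) ⊗ₜ x) ((ι b ⊗ₜ (1 : T)) * v) =
        (ι b ⊗ₜ (1 : T)) * TensorProduct.map₂ mqs mqs ((1 : T) ⊗ₜ x) v := by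
    intro b x v
    induction v using TensorProduct.induction_on with
    | zero => simp
    | add v₁ v₂ h₁ h₂ =>
      simp only [mul_add, map_add, h₁, h₂]
    | tmul r s =>
      simp [Algebra.TensorProduct.tmul_mul_tmul, TensorProduct.map₂_apply_tmul,
        hleft]
  have keyiv : ∀ x y : T,
      TensorProduct.map₂ mqs mqs ((1 : T) ⊗ₜ x) ((1 : T) ⊗ₜ y) =
        (1 : T) ⊗ₜ mqs x y := by
    intro x y
    simp [TensorProduct.map₂_apply_tmul, hleft]
  -- the Δ statement on monomials, by induction on total length
  have caseL : ∀ y : T, Δ (mqs 1 y) = TensorProduct.map₂ mqs mqs (Δ 1) (Δ y) := by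
    intro y
    rw [hleft, hΔone, hunitL]
  have caseR : ∀ x : T, Δ (mqs x 1) = TensorProduct.map₂ mqs mqs (Δ x) (Δ 1) := by
    intro x
    rw [hright, hΔone, hunitR]
  have main : ∀ (n : ℕ) (l l' : List A), l.length + l'.length ≤ n →
      Δ (mqs (qsMono l) (qsMono l')) =
        TensorProduct.map₂ mqs mqs (Δ (qsMono l)) (Δ (qsMono l')) := by
    intro n
    induction n with
    | zero =>
      intro l l' h
      have hl : l = [] := List.length_eq_zero_iff.mp (by omega)
      subst hl
      rw [qsMono_nil]
      exact caseL _
    | succ n ih =>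
      intro l l' h
      match l, l' with
      | [], l' => rw [qsMono_nil]; exact caseL _
      | a :: l₁, [] => rw [qsMono_nil]; exact caseR _
      | a :: l₁, b :: l₂ =>
        simp only [List.length_cons] at h
        set X := qsMono (k := k) l₁ with hX
        set Y := qsMono (k := k) l₂ with hY
        have e1 : qsMono (k := k) (a :: l₁) = ι a * X := rfl
        have e2 : qsMono (k := k) (b :: l₂) = ι b * Y := rfl
        have ih1 : Δ (mqs X (ι b * Y)) =
            TensorProduct.map₂ mqs mqs (Δ X) (Δ (ι b * Y)) := by
          rw [hX, hY, ← e2]; exact ih l₁ (b :: l₂) (by simp; omega)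
        have ih2 : Δ (mqs (ι a * X) Y) =
            TensorProduct.map₂ mqs mqs (Δ (ι a * X)) (Δ Y) := by
          rw [hX, hY, ← e1]; exact ih (a :: l₁) l₂ (by simp; omega)
        have ih3 : Δ (mqs X Y) = TensorProduct.map₂ mqs mqs (Δ X) (Δ Y) := by
          rw [hX, hY]; exact ih l₁ l₂ (by omega)
        rw [e1, e2]
        simp only [hrec, map_add, LinearMap.add_apply, hΔrec, ih1, ih2, ih3,
          keyi, keyii, keyiii, keyiv, mul_add, TensorProduct.tmul_add]
        abel
  have hspan := qsMono_span (k := k) (A := A)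
  constructor
  · intro x y
    induction qsMono_span (k := k) x, qsMono_span (k := k) y using
        Submodule.span_induction₂ with
    | mem_mem x y hx hy =>
      obtain ⟨l, rfl⟩ := hx
      obtain ⟨l', rfl⟩ := hy
      exact main (l.length + l'.length) l l' le_rfl
    | zero_left y hy => simp
    | zero_right x hx => simp
    | add_left x y z hx hy hz h1 h2 =>
      simp only [map_add, LinearMap.add_apply, h1, h2]
    | add_right x y z hx hy hz h1 h2 =>
      simp only [map_add, LinearMap.add_apply, h1, h2]
    | smul_left r x y hx hy h1 =>
      simp only [map_smul, LinearMap.smul_apply, h1]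
    | smul_right r x y hx hy h1 =>
      simp only [map_smul, LinearMap.smul_apply, h1]
  · intro x y
    induction qsMono_span (k := k) x, qsMono_span (k := k) y using
        Submodule.span_induction₂ with
    | mem_mem x y hx hy =>
      obtain ⟨l, rfl⟩ := hx
      obtain ⟨l', rfl⟩ := hy
      match l, l' with
      | [], l' => rw [qsMono_nil, hleft, hεone, one_mul]
      | a :: l₁, [] => rw [qsMono_nil, hright, hεone, mul_one]
      | a :: l₁, b :: l₂ =>
        rw [qsMono_cons, qsMono_cons, hrec]
        simp [hεrec, ι]
    | zero_left y hy => simp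
    | zero_right x hx => simp
    | add_left x y z hx hy hz h1 h2 =>
      simp only [map_add, LinearMap.add_apply, h1, h2]; ring
    | add_right x y z hx hy hz h1 h2 =>
      simp only [map_add, LinearMap.add_apply, h1, h2]; ring
    | smul_left r x y hx hy h1 =>
      simp only [map_smul, LinearMap.smul_apply, h1, smul_mul_assoc]
    | smul_right r x y hx hy h1 =>
      simp only [map_smul, LinearMap.smul_apply, h1, mul_smul_comm]
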